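/- Let ρ be a density matrix and M a Hermitian positive semidefinite matrix with non-degenerate spectrum (all eigenvalues distinct). If tr(M²ρ) = (tr(Mρ))², then ρ is a rank-one projector onto an eigenvector of M, i.e., ρ = |m⟩⟨m| for some eigenvector |m⟩ of M. -/

import Mathlib

open scoped ComplexOrder

theorem stmt3 (n : ℕ) (ρ M : Matrix (Fin (n + 1)) (Fin (n + 1)) ℂ)
    (hρ : ρ.PosSemidef) (hρtr : ρ.trace = 1) (hM : M.PosSemidef)
    (hspec : Function.Injective hM.1.eigenvalues)
    (heq : (M ^ 2 * ρ).trace = ((M * ρ).trace) ^ 2) :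
    ∃ (v : Fin (n + 1) → ℂ) (μ : ℝ),
      (∑ i, Complex.normSq (v i)) = 1 ∧
      M.mulVec v = (μ : ℂ) • v ∧
      ρ = Matrix.vecMulVec v (star v) := by
  classical
  set hH := hM.1 with hHdef
  set U : Matrix (Fin (n+1)) (Fin (n+1)) ℂ := ((hH.eigenvectorUnitary : Matrix.unitaryGroup (Fin (n+1)) ℂ) : Matrix (Fin (n+1)) (Fin (n+1)) ℂ) with hUdef
  have hUU : star U * U = 1 := Unitary.coe_star_mul_self hH.eigenvectorUnitary
  have hUU' : U * star U = 1 := Unitary.coe_mul_star_self hH.eigenvectorUnitary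
  set lam : Fin (n+1) → ℝ := hH.eigenvalues with hlam
  set D : Matrix (Fin (n+1)) (Fin (n+1)) ℂ :=
    Matrix.diagonal (fun i => (lam i : ℂ)) with hDdef
  have hspect : M = U * D * star U := by
    have := hH.spectral_theorem
    rw [Unitary.conjStarAlgAut_apply] at this
    exact this
  set σ : Matrix (Fin (n+1)) (Fin (n+1)) ℂ := star U * ρ * U with hσdef
  have hσ : σ.PosSemidef := by
    rw [hσdef]
    simpa [Matrix.star_eq_conjTranspose] using hρ.conjTranspose_mul_mul_same U
  have hρeq : ρ = U * σ * star U := by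
    rw [hσdef]
    calc ρ = (U * star U) * ρ * (U * star U) := by rw [hUU']; simp
    _ = U * (star U * ρ * U) * star U := by noncomm_ring
  -- trace identities
  have key : ∀ A : Matrix (Fin (n+1)) (Fin (n+1)) ℂ,
      (U * A * star U * ρ).trace = (A * σ).trace := by
    intro A
    rw [show U * A * star U * ρ = U * (A * (star U * ρ)) from by noncomm_ring,
      Matrix.trace_mul_comm,
      show A * (star U * ρ) * U = A * (star U * ρ * U) from by noncomm_ring, ← hσdef]
  have hM2 : M ^ 2 = U * (D * D) * star U := by
    rw [pow_two, hspect]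
    calc U*D*star U*(U*D*star U) = U*D*(star U*U)*D*star U := by noncomm_ring
    _ = U*(D*D)*star U := by rw [hUU]; noncomm_ring
  have htrD : ∀ (d : Fin (n+1) → ℂ) (A : Matrix (Fin (n+1)) (Fin (n+1)) ℂ),
      (Matrix.diagonal d * A).trace = ∑ i, d i * A i i := by
    intro d A
    simp [Matrix.trace, Matrix.diag, Matrix.diagonal_mul]
  -- diagonal entries of σ
  have hdiag : ∀ i, 0 ≤ σ i i := by
    intro i
    exact hσ.diag_nonneg
  set p : Fin (n+1) → ℝ := fun i => (σ i i).re with hpdef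
  have hσre : ∀ i, σ i i = (p i : ℂ) := by
    intro i
    have him := (Complex.nonneg_iff.mp (hdiag i)).2
    apply Complex.ext
    · simp [hpdef]
    · simp [hpdef, ← him]
  have hpnn : ∀ i, 0 ≤ p i := fun i => (Complex.nonneg_iff.mp (hdiag i)).1
  have htrσ : σ.trace = 1 := by
    rw [hσdef, Matrix.trace_mul_cycle, hUU', one_mul, hρtr]
  have hsum : ∑ i, p i = 1 := by
    have h1 : ∑ i, (p i : ℂ) = 1 := by
      rw [← htrσ]
      simp [Matrix.trace, Matrix.diag, hσre]
    exact_mod_cast h1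
  -- translate heq
  have h1 : (M * ρ).trace = ∑ i, (lam i : ℂ) * (p i : ℂ) := by
    rw [hspect, key D, hDdef, htrD]
    exact Finset.sum_congr rfl fun i _ => by rw [hσre]
  have h2 : (M ^ 2 * ρ).trace = ∑ i, ((lam i : ℂ))^2 * (p i : ℂ) := by
    rw [hM2, key (D * D), hDdef, Matrix.diagonal_mul_diagonal, htrD]
    exact Finset.sum_congr rfl fun i _ => by rw [hσre]; ring
  have hEq2 : ∑ i, lam i ^ 2 * p i = (∑ i, lam i * p i) ^ 2 := by
    rw [h1, h2] at heq
    have : ((∑ i, lam i ^ 2 * p i : ℝ) : ℂ) = ((∑ i, lam i * p i : ℝ) : ℂ) ^ 2 := by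
      push_cast
      convert heq using 2
    exact_mod_cast this
  set m : ℝ := ∑ i, lam i * p i with hmdef
  have hvar : ∑ i, p i * (lam i - m) ^ 2 = 0 := by
    have expand : ∑ i, p i * (lam i - m) ^ 2
        = (∑ i, lam i ^ 2 * p i) - 2 * m * (∑ i, lam i * p i) + m ^ 2 * (∑ i, p i) := by
      have hterm : ∀ i, p i * (lam i - m) ^ 2
          = lam i ^ 2 * p i - 2 * m * (lam i * p i) + m ^ 2 * p i := fun i => by ring
      simp_rw [hterm, Finset.sum_add_distrib, Finset.sum_sub_distrib, ← Finset.mul_sum]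
    rw [expand, hEq2, hsum, ← hmdef]
    ring
  have hzero : ∀ i, p i * (lam i - m) ^ 2 = 0 := by
    intro i
    have := (Finset.sum_eq_zero_iff_of_nonneg (fun i _ =>
      mul_nonneg (hpnn i) (sq_nonneg _))).mp hvar
    exact this i (Finset.mem_univ i)
  have hlm : ∀ i, p i ≠ 0 → lam i = m := by
    intro i hi
    rcases mul_eq_zero.mp (hzero i) with h | h
    · exact absurd h hi
    · have := pow_eq_zero_iff (n := 2) (by norm_num) |>.mp h
      linarith [sub_eq_zero.mp this]
  obtain ⟨j, hj⟩ : ∃ j, p j ≠ 0 := by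
    by_contra h
    push_neg at h
    rw [Finset.sum_eq_zero (fun i _ => h i)] at hsum
    norm_num at hsum
  have hpi0 : ∀ i, i ≠ j → p i = 0 := by
    intro i hij
    by_contra hpi
    exact hij (hspec (by rw [← hHdef] at *; show lam i = lam j; rw [hlm i hpi, hlm j hj]))
  have hpj : p j = 1 := by
    rw [← hsum, Finset.sum_eq_single j (fun i _ hi => hpi0 i hi) (by simp)]
  -- structure of σ
  obtain ⟨B, hB⟩ : ∃ B : Matrix (Fin (n+1)) (Fin (n+1)) ℂ, σ = Matrix.conjTranspose B * B := by
    open scoped MatrixOrder in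
    exact (CStarAlgebra.nonneg_iff_eq_star_mul_self.mp hσ.nonneg).imp
      fun B hB => by rw [hB, Matrix.star_eq_conjTranspose]
  have hBcol : ∀ i, i ≠ j → ∀ k, B k i = 0 := by
    intro i hi k
    have h0 : σ i i = 0 := by rw [hσre i, hpi0 i hi]; simp
    rw [hB, Matrix.mul_apply] at h0
    simp only [Matrix.conjTranspose_apply] at h0
    have h0' : ∑ k, Complex.normSq (B k i) = 0 := by
      have : ∑ k, (Complex.normSq (B k i) : ℂ) = 0 := by
        rw [← h0]
        exact Finset.sum_congr rfl fun k _ => by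
          rw [Complex.normSq_eq_conj_mul_self]; rfl
      exact_mod_cast this
    have := (Finset.sum_eq_zero_iff_of_nonneg (fun k _ => Complex.normSq_nonneg _)).mp h0'
      k (Finset.mem_univ k)
    exact Complex.normSq_eq_zero.mp this
  have hσent : ∀ a b, σ a b = (if a = j then 1 else 0) * (if b = j then 1 else 0) := by
    intro a b
    by_cases ha : a = j
    · by_cases hb : b = j
      · rw [ha, hb]; simp [hσre j, hpj]
      · rw [hB, Matrix.mul_apply]
        simp [Matrix.conjTranspose_apply, hBcol b hb, hb]
    · rw [hB, Matrix.mul_apply]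
      simp [Matrix.conjTranspose_apply, hBcol a ha, ha]
  -- conclude
  refine ⟨fun i => U i j, lam j, ?_, ?_, ?_⟩
  · have hjj := congrFun (congrFun hUU j) j
    rw [Matrix.mul_apply] at hjj
    simp only [Matrix.star_apply, Matrix.one_apply_eq] at hjj
    have : ∑ k, (Complex.normSq (U k j) : ℂ) = 1 := by
      rw [← hjj]
      exact Finset.sum_congr rfl fun k _ => by
        rw [Complex.normSq_eq_conj_mul_self]; rfl
    exact_mod_cast this
  · have hv : (fun i => U i j) = ⇑(hH.eigenvectorBasis j) := by
      funext i
      exact hH.eigenvectorUnitary_apply i j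
    rw [hv, hH.mulVec_eigenvectorBasis j]
    funext i
    simp [Complex.real_smul]
    left; rfl
  · rw [hρeq]
    ext a b
    rw [Matrix.mul_apply]
    simp only [Matrix.mul_apply, hσent, Matrix.star_apply, mul_ite, ite_mul, mul_one, one_mul,
      mul_zero, zero_mul, Finset.sum_ite_eq, Finset.sum_ite_eq', Finset.mem_univ, if_true]
    simp [Matrix.vecMulVec_apply]
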